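/- arXiv:math/9911243 — 2 statements merged into one kernel-verified Lean document; each statement's English description precedes it below -/
import Mathlib

section
/- For n ≥ 3, the number of permutations of {1,…,n} avoiding both 123 and 132 equals 2^(n-1), and the number avoiding both 213 and 231 also equals 2^(n-1). -/
/-- An occurrence of the pattern `τ` in `α` at the strictly increasing
index sequence `f`: the subsequence `α ∘ f` is order-isomorphic to `τ`. -/
def PattOccursAt {k n : ℕ} (τ : Equiv.Perm (Fin k)) (α : Equiv.Perm (Fin n))
    (f : Fin k → Fin n) : Prop :=
  StrictMono f ∧ ∀ i j : Fin k, τ i < τ j ↔ α (f i) < α (f j)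

/-- `α` contains the pattern `τ`. -/
def Contains {k n : ℕ} (τ : Equiv.Perm (Fin k)) (α : Equiv.Perm (Fin n)) : Prop :=
  ∃ f, PattOccursAt τ α f

/-- `α` avoids the pattern `τ`. -/
def Avoids {k n : ℕ} (τ : Equiv.Perm (Fin k)) (α : Equiv.Perm (Fin n)) : Prop :=
  ¬ Contains τ α

/-- `α` contains the pattern `τ` exactly once. -/
def ContainsExactlyOnce {k n : ℕ} (τ : Equiv.Perm (Fin k)) (α : Equiv.Perm (Fin n)) : Prop :=
  ∃! f, PattOccursAt τ α f

/-- `T_k^m`: the permutations `σ` of length `k` with first entry `σ(1) = m`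
(one-based; in `Fin k` terms, `(σ 0) + 1 = m`). -/
def Tkm (k m : ℕ) : Set (Equiv.Perm (Fin k)) :=
  {σ | ∀ i : Fin k, (i : ℕ) = 0 → (σ i : ℕ) + 1 = m}

namespace S18
open Finset

/-- number of `true`s of `b` below `i` -/
def tc (b : ℕ → Bool) : ℕ → ℕ
  | 0 => 0
  | i+1 => tc b i + (if b i then 1 else 0)

lemma tc_le (b : ℕ → Bool) (i : ℕ) : tc b i ≤ i := by
  induction i with
  | zero => simp [tc]
  | succ i ih => simp only [tc]; split <;> omega

lemma tc_mono (b : ℕ → Bool) {i j : ℕ} (h : i ≤ j) : tc b i ≤ tc b j := by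
  induction j with
  | zero => obtain rfl : i = 0 := by omega
            exact le_refl _
  | succ j ih =>
    rcases Nat.lt_or_ge i (j+1) with h' | h'
    · have := ih (by omega); simp only [tc]; split <;> omega
    · obtain rfl : i = j + 1 := by omega
      exact le_refl _

lemma tc_sub_le (b : ℕ → Bool) {i j : ℕ} (h : i ≤ j) : tc b j ≤ tc b i + (j - i) := by
  induction j with
  | zero => obtain rfl : i = 0 := by omega
            simp
  | succ j ih =>
    rcases Nat.lt_or_ge i (j+1) with h' | h'
    · have := ih (by omega); simp only [tc]; split <;> omega
    · obtain rfl : i = j + 1 := by omega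
      simp

lemma tc_lt (b : ℕ → Bool) {i j : ℕ} (hb : b i = true) (h : i < j) : tc b i < tc b j := by
  have h1 : tc b (i+1) = tc b i + 1 := by simp [tc, hb]
  have := tc_mono b (show i + 1 ≤ j by omega)
  omega

lemma tc_false (b : ℕ → Bool) {i j : ℕ} (hb : b i = false) (h : i < j) :
    tc b j + 1 ≤ tc b i + (j - i) := by
  have h1 : tc b (i+1) = tc b i := by simp [tc, hb]
  have := tc_sub_le b (show i + 1 ≤ j by omega)
  omega

lemma tc_eq_card (b : ℕ → Bool) (m : ℕ) :
    tc b m = ((Finset.range m).filter (fun k => b k = true)).card := by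
  induction m with
  | zero => simp [tc]
  | succ m ih =>
    rw [Finset.range_add_one, Finset.filter_insert]
    simp only [tc]
    split
    · rw [Finset.card_insert_of_notMem (by simp)]; omega
    · omega



lemma card_fin_lt (n : ℕ) (j : Fin n) (P : ℕ → Prop) [DecidablePred P] :
    (Finset.univ.filter fun k : Fin n => k < j ∧ P (k : ℕ)).card
      = ((Finset.range (j : ℕ)).filter P).card := by
  refine Finset.card_bij (fun k _ => (k : ℕ)) ?_ ?_ ?_
  · intro k hk
    simp only [Finset.mem_filter, Finset.mem_univ, true_and] at hk
    simp only [Finset.mem_filter, Finset.mem_range]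
    exact ⟨hk.1, hk.2⟩
  · intro a ha b hb h
    exact Fin.ext h
  · intro m hm
    simp only [Finset.mem_filter, Finset.mem_range] at hm
    refine ⟨⟨m, lt_trans hm.1 j.isLt⟩, ?_, rfl⟩
    simp only [Finset.mem_filter, Finset.mem_univ, true_and]
    exact ⟨hm.1, hm.2⟩

lemma card_lt_val (n : ℕ) (j : Fin n) :
    (Finset.univ.filter fun k : Fin n => k < j).card = (j : ℕ) := by
  have := card_fin_lt n j (fun _ => True)
  simp only [and_true] at this
  rw [this]
  simp only [Finset.filter_true, Finset.card_range]

lemma card_gt_val (n : ℕ) (j : Fin n) :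
    (Finset.univ.filter fun k : Fin n => j < k).card = n - 1 - (j : ℕ) := by
  have h1 : (Finset.univ.filter fun k : Fin n => k ≤ j).card = (j : ℕ) + 1 := by
    have : (Finset.univ.filter fun k : Fin n => k ≤ j)
        = insert j (Finset.univ.filter fun k : Fin n => k < j) := by
      ext k
      simp only [Finset.mem_filter, Finset.mem_univ, true_and, Finset.mem_insert]
      constructor
      · intro h; rcases eq_or_lt_of_le h with h | h
        · exact Or.inl h
        · exact Or.inr h
      · rintro (rfl | h); · exact le_refl _
        · exact le_of_lt h
    rw [this, Finset.card_insert_of_notMem (by simp), card_lt_val]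
  have h2 := Finset.card_filter_add_card_filter_not
    (s := (Finset.univ : Finset (Fin n))) (p := fun k => k ≤ j)
  have h3 : (Finset.univ.filter fun k : Fin n => ¬ k ≤ j)
      = Finset.univ.filter fun k : Fin n => j < k := by
    ext k; simp [not_le]
  rw [h3, h1] at h2
  simp only [Finset.card_univ, Fintype.card_fin] at h2
  omega

lemma card_val_lt (n : ℕ) (α : Equiv.Perm (Fin n)) (i : Fin n) :
    (Finset.univ.filter fun k : Fin n => α k < α i).card = (α i : ℕ) := by
  have himg : (Finset.univ.filter fun k : Fin n => α k < α i).image α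
      = Finset.univ.filter fun v : Fin n => v < α i := by
    ext v
    simp only [Finset.mem_image, Finset.mem_filter, Finset.mem_univ, true_and]
    constructor
    · rintro ⟨k, hk, rfl⟩; exact hk
    · intro hv; exact ⟨α.symm v, by simpa using hv, by simp⟩
  have := Finset.card_image_of_injective
    (Finset.univ.filter fun k : Fin n => α k < α i) α.injective
  rw [himg] at this
  rw [← this, card_lt_val]

/-- split of the "values below" count at position `i` -/
lemma card_val_lt_split (n : ℕ) (α : Equiv.Perm (Fin n)) (i : Fin n) :
    (α i : ℕ) = (Finset.univ.filter fun k : Fin n => k < i ∧ α k < α i).card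
      + (Finset.univ.filter fun k : Fin n => i < k ∧ α k < α i).card := by
  rw [← card_val_lt n α i]
  rw [← Finset.card_union_of_disjoint]
  · congr 1
    ext k
    simp only [Finset.mem_filter, Finset.mem_univ, true_and, Finset.mem_union]
    constructor
    · intro h
      have hk : k ≠ i := by rintro rfl; exact absurd h (lt_irrefl _)
      rcases lt_or_gt_of_ne hk with h' | h'
      · exact Or.inl ⟨h', h⟩
      · exact Or.inr ⟨h', h⟩
    · rintro (⟨_, h⟩ | ⟨_, h⟩) <;> exact h
  · simp only [Finset.disjoint_left, Finset.mem_filter, Finset.mem_univ, true_and]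
    rintro k ⟨h1, _⟩ ⟨h2, _⟩
    exact absurd (lt_trans h1 h2) (lt_irrefl _)


def fB (n : ℕ) (b : ℕ → Bool) (i : ℕ) : ℕ :=
  if b i then n - 1 - tc b i else i - tc b i

lemma fB_lt (n : ℕ) (b : ℕ → Bool) {i : ℕ} (hi : i < n) : fB n b i < n := by
  have := tc_le b i
  unfold fB; split <;> omega

lemma fB_desc (n : ℕ) (b : ℕ → Bool) {i j : ℕ} (hb : b i = true)
    (hij : i < j) (hj : j < n) : fB n b j < fB n b i := by
  have h1 := tc_lt b hb hij
  have h2 := tc_le b i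
  have h3 := tc_le b j
  unfold fB
  rw [hb, if_pos rfl]
  split <;> omega

lemma fB_asc (n : ℕ) (b : ℕ → Bool) {i j : ℕ} (hb : b i = false)
    (hij : i < j) (hj : j < n) : fB n b i < fB n b j := by
  have h1 := tc_false b hb hij
  have h2 := tc_le b i
  have h3 := tc_le b j
  have h4 := tc_mono b (le_of_lt hij)
  unfold fB
  rw [hb, if_neg (by simp)]
  split <;> omega

variable {n : ℕ}

/-- extension of `b : Fin (n-1) → Bool` to `ℕ` by `false` -/
def bext (n : ℕ) (b : Fin (n-1) → Bool) (k : ℕ) : Bool :=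
  if h : k < n - 1 then b ⟨k, h⟩ else false

noncomputable def GB (n : ℕ) (b : Fin (n-1) → Bool) : Equiv.Perm (Fin n) :=
  Equiv.ofBijective (fun i => (⟨fB n (bext n b) i, fB_lt n _ i.isLt⟩ : Fin n))
    (Finite.injective_iff_bijective.mp (by
      intro i j h
      simp only [Fin.mk.injEq] at h
      by_contra hne
      rcases lt_or_gt_of_ne (fun hv => hne hv) with hij | hij
      · rcases hbi : bext n b i with _ | _
        · exact absurd h (Nat.ne_of_lt (fB_asc n _ hbi (Fin.lt_def.mp hij) j.isLt))
        · exact absurd h (Nat.ne_of_gt (fB_desc n _ hbi (Fin.lt_def.mp hij) j.isLt))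
      · rcases hbj : bext n b j with _ | _
        · exact absurd h (Nat.ne_of_gt (fB_asc n _ hbj (Fin.lt_def.mp hij) i.isLt))
        · exact absurd h (Nat.ne_of_lt (fB_desc n _ hbj (Fin.lt_def.mp hij) i.isLt))))

lemma GB_apply (b : Fin (n-1) → Bool) (i : Fin n) :
    (GB n b i : ℕ) = fB n (bext n b) i := rfl


-- NEW PART
variable {n : ℕ}

def SB (n : ℕ) : Set (Equiv.Perm (Fin n)) :=
  {α : Equiv.Perm (Fin n) |
        (¬ ∃ i j l : Fin n, i < j ∧ j < l ∧ α j < α i ∧ α i < α l) ∧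
        (¬ ∃ i j l : Fin n, i < j ∧ j < l ∧ α l < α i ∧ α i < α j)}

lemma GB_desc (b : Fin (n-1) → Bool) {i j : Fin n} (hb : bext n b (i : ℕ) = true)
    (hij : i < j) : GB n b j < GB n b i := by
  rw [Fin.lt_def, GB_apply, GB_apply]
  exact fB_desc n _ hb (Fin.lt_def.mp hij) j.isLt

lemma GB_asc (b : Fin (n-1) → Bool) {i j : Fin n} (hb : bext n b (i : ℕ) = false)
    (hij : i < j) : GB n b i < GB n b j := by
  rw [Fin.lt_def, GB_apply, GB_apply]
  exact fB_asc n _ hb (Fin.lt_def.mp hij) j.isLt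

lemma GB_mem (b : Fin (n-1) → Bool) : GB n b ∈ SB n := by
  constructor
  · rintro ⟨i, j, l, hij, hjl, h1, h2⟩
    rcases hb : bext n b (i : ℕ) with _ | _
    · exact absurd (GB_asc b hb hij) (asymm h1)
    · exact absurd (GB_desc b hb (lt_trans hij hjl)) (asymm h2)
  · rintro ⟨i, j, l, hij, hjl, h1, h2⟩
    rcases hb : bext n b (i : ℕ) with _ | _
    · exact absurd (GB_asc b hb (lt_trans hij hjl)) (asymm h1)
    · exact absurd (GB_desc b hb hij) (asymm h2)

lemma GB_inj : Function.Injective (GB n) := by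
  intro b1 b2 h
  funext k
  have hk : (k : ℕ) < n - 1 := k.isLt
  have hkn : (k : ℕ) < n := by omega
  have hkn' : (k : ℕ) + 1 < n := by omega
  have key : ∀ b : Fin (n-1) → Bool,
      b k = decide ((GB n b ⟨(k:ℕ)+1, hkn'⟩ : ℕ) < (GB n b ⟨(k:ℕ), hkn⟩ : ℕ)) := by
    intro b
    have hbe : bext n b (k : ℕ) = b k := by
      unfold bext; rw [dif_pos hk]
    rcases hb : b k with _ | _
    · rw [hb] at hbe
      have := fB_asc n (bext n b) hbe (by omega : (k:ℕ) < (k:ℕ) + 1) hkn'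
      rw [GB_apply, GB_apply]
      symm
      rw [decide_eq_false_iff_not]
      simp only [Fin.val_mk]
      omega
    · rw [hb] at hbe
      have := fB_desc n (bext n b) hbe (by omega : (k:ℕ) < (k:ℕ) + 1) hkn'
      rw [GB_apply, GB_apply]
      symm
      rw [decide_eq_true_eq]
      simp only [Fin.val_mk]
      omega
  rw [key b1, key b2, h]

/-- the dominance class -/
def Dcl (α : Equiv.Perm (Fin n)) (i : Fin n) : Prop := ∀ m, i < m → α m < α i

instance (α : Equiv.Perm (Fin n)) (i : Fin n) : Decidable (Dcl α i) := by
  unfold Dcl; infer_instance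

lemma dichotomy {α : Equiv.Perm (Fin n)} (hα : α ∈ SB n) (i : Fin n) :
    Dcl α i ∨ (∀ m, i < m → α i < α m) := by
  by_contra hc
  simp only [Dcl] at hc
  push_neg at hc
  obtain ⟨⟨m1, hm1, hm1'⟩, ⟨m2, hm2, hm2'⟩⟩ := hc
  have hm1s : α i < α m1 :=
    lt_of_le_of_ne hm1' (fun h => (ne_of_lt hm1) (α.injective h))
  have hm2s : α m2 < α i :=
    lt_of_le_of_ne hm2' (fun h => (ne_of_lt hm2) (α.injective h).symm)
  have hne : m2 ≠ m1 := by
    intro h; rw [h] at hm2s; exact absurd hm1s (asymm hm2s)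
  rcases lt_or_gt_of_ne hne with h | h
  · exact hα.1 ⟨i, m2, m1, hm2, h, hm2s, hm1s⟩
  · exact hα.2 ⟨i, m1, m2, hm1, h, hm2s, hm1s⟩

lemma SB_val {α : Equiv.Perm (Fin n)} (hα : α ∈ SB n) (i : Fin n)
    (b : Fin (n-1) → Bool)
    (hb : ∀ k : Fin (n-1), b k = decide (Dcl α (Fin.castLE (by omega) k))) :
    (α i : ℕ) = fB n (bext n b) (i : ℕ) := by
  have hiN : (i : ℕ) ≤ n - 1 := by have := i.isLt; omega
  -- the count of dominant positions below i is tc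
  have htc : tc (bext n b) (i : ℕ)
      = (Finset.univ.filter fun k : Fin n => k < i ∧ Dcl α k).card := by
    rw [tc_eq_card, ← card_fin_lt n i (fun k => bext n b k = true)]
    congr 1
    ext k
    simp only [Finset.mem_filter, Finset.mem_univ, true_and, and_congr_right_iff]
    intro hk
    have hk1 : (k : ℕ) < n - 1 := by
      have := Fin.lt_def.mp hk; omega
    unfold bext
    rw [dif_pos hk1, hb ⟨(k:ℕ), hk1⟩]
    have : Fin.castLE (by omega : n - 1 ≤ n) (⟨(k:ℕ), hk1⟩ : Fin (n-1)) = k := by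
      apply Fin.ext; rfl
    rw [this]
    simp [decide_eq_true_iff]
  -- the E1 count
  have hE1 : (Finset.univ.filter fun k : Fin n => k < i ∧ α k < α i).card
      = (i : ℕ) - tc (bext n b) (i : ℕ) := by
    have hsplit := Finset.card_filter_add_card_filter_not
      (s := Finset.univ.filter fun k : Fin n => k < i) (p := fun k => Dcl α k)
    rw [Finset.filter_filter, Finset.filter_filter, card_lt_val] at hsplit
    have he : (Finset.univ.filter fun k : Fin n => k < i ∧ α k < α i)
        = (Finset.univ.filter fun k : Fin n => k < i ∧ ¬ Dcl α k) := by
      ext k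
      simp only [Finset.mem_filter, Finset.mem_univ, true_and, and_congr_right_iff]
      intro hk
      constructor
      · intro hlt hD
        exact absurd (hD i hk) (asymm hlt)
      · intro hD
        rcases dichotomy hα k with h | h
        · exact absurd h hD
        · exact h i hk
    rw [he, htc]
    omega
  rcases dichotomy hα i with hD | hS
  · -- dominant: all later are smaller
    have hE2 : (Finset.univ.filter fun k : Fin n => i < k ∧ α k < α i).card
        = n - 1 - (i : ℕ) := by
      rw [← card_gt_val n i]
      congr 1
      ext k
      simp only [Finset.mem_filter, Finset.mem_univ, true_and, and_iff_left_iff_imp]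
      exact fun hk => hD k hk
    have hval := card_val_lt_split n α i
    rw [hE1, hE2] at hval
    have htl := tc_le (bext n b) (i : ℕ)
    unfold fB
    rcases Nat.lt_or_ge (i : ℕ) (n - 1) with hi | hi
    · have : bext n b (i : ℕ) = true := by
        unfold bext
        rw [dif_pos hi, hb ⟨(i:ℕ), hi⟩]
        have hci : Fin.castLE (by omega : n - 1 ≤ n) (⟨(i:ℕ), hi⟩ : Fin (n-1)) = i :=
          Fin.ext rfl
        rw [hci]
        simp [hD]
      rw [this, if_pos rfl]
      omega
    · have : bext n b (i : ℕ) = false := by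
        unfold bext; rw [dif_neg (by omega)]
      rw [this, if_neg (by simp)]
      omega
  · -- small: all later are bigger
    have hE2 : (Finset.univ.filter fun k : Fin n => i < k ∧ α k < α i).card = 0 := by
      rw [Finset.card_eq_zero]
      ext k
      simp only [Finset.mem_filter, Finset.mem_univ, true_and, Finset.notMem_empty,
        iff_false, not_and]
      intro hk
      exact asymm (hS k hk)
    have hval := card_val_lt_split n α i
    rw [hE1, hE2] at hval
    unfold fB
    rcases Nat.lt_or_ge (i : ℕ) (n - 1) with hi | hi
    · have : bext n b (i : ℕ) = false := by
        unfold bext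
        rw [dif_pos hi, hb ⟨(i:ℕ), hi⟩]
        have hci : Fin.castLE (by omega : n - 1 ≤ n) (⟨(i:ℕ), hi⟩ : Fin (n-1)) = i :=
          Fin.ext rfl
        rw [hci]
        simp only [decide_eq_false_iff_not]
        intro hD
        have hin : (i : ℕ) + 1 < n := by omega
        have hlt : i < (⟨(i:ℕ)+1, hin⟩ : Fin n) := by
          rw [Fin.lt_def]; simp
        exact absurd (hD _ hlt) (asymm (hS _ hlt))
      rw [this, if_neg (by simp)]
      omega
    · have : bext n b (i : ℕ) = false := by
        unfold bext; rw [dif_neg (by omega)]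
      rw [this, if_neg (by simp)]
      omega

lemma SB_eq : SB n = Set.range (GB n) := by
  ext α
  constructor
  · intro hα
    set b : Fin (n-1) → Bool :=
      fun k => decide (Dcl α (Fin.castLE (by omega) k)) with hbdef
    refine ⟨b, ?_⟩
    apply Equiv.ext
    intro i
    apply Fin.ext
    rw [GB_apply]
    exact (SB_val hα i b (fun k => rfl)).symm
  · rintro ⟨b, rfl⟩
    exact GB_mem b

lemma SB_card : (SB n).ncard = 2 ^ (n - 1) := by
  rw [SB_eq, ← Set.image_univ, Set.ncard_image_of_injective _ GB_inj, Set.ncard_univ]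
  simp [Nat.card_eq_fintype_card]



/-- index after the last `true` of `b` below `i` -/
def pc (b : ℕ → Bool) : ℕ → ℕ
  | 0 => 0
  | i+1 => if b i then i+1 else pc b i

lemma pc_succ (b : ℕ → Bool) (i : ℕ) : pc b (i+1) = if b i then i+1 else pc b i := rfl

lemma pc_le (b : ℕ → Bool) (i : ℕ) : pc b i ≤ i := by
  induction i with
  | zero => simp [pc]
  | succ i ih => rw [pc_succ]; split <;> omega

lemma pc_ge (b : ℕ → Bool) {i j : ℕ} (hb : b i = true) (h : i < j) :
    i + 1 ≤ pc b j := by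
  induction j with
  | zero => omega
  | succ j ih =>
    by_cases hbj : b j = true
    · rw [pc_succ, if_pos hbj]; omega
    · rw [pc_succ, if_neg hbj]
      rcases Nat.lt_or_ge i j with h' | h'
      · exact ih h'
      · obtain rfl : i = j := by omega
        exact absurd hb hbj

lemma pc_true (b : ℕ → Bool) {j k : ℕ} (h : pc b j = k + 1) : b k = true := by
  induction j with
  | zero => simp [pc] at h
  | succ j ih =>
    rw [pc_succ] at h
    by_cases hbj : b j = true
    · rw [if_pos hbj] at h
      obtain rfl : k = j := by omega
      assumption
    · rw [if_neg hbj] at h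
      exact ih h

lemma pc_run (b : ℕ → Bool) {m i : ℕ} (hmi : m ≤ i)
    (hrun : ∀ k, m ≤ k → k < i → b k = false)
    (hstart : m = 0 ∨ b (m - 1) = true) : pc b i = m := by
  induction i with
  | zero => simp [pc]; omega
  | succ i ih =>
    rcases Nat.lt_or_ge m (i+1) with h' | h'
    · have hbi : b i = false := hrun i (by omega) (by omega)
      rw [pc_succ, if_neg (by simp [hbi])]
      exact ih (by omega) (fun k hk1 hk2 => hrun k hk1 (by omega))
    · obtain rfl : m = i + 1 := by omega
      rcases hstart with h0 | hbt
      · omega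
      · simp only [Nat.add_sub_cancel] at hbt
        rw [pc_succ, if_pos hbt]

def fA (n : ℕ) (b : ℕ → Bool) (i : ℕ) : ℕ :=
  if b i then n - 1 - pc b i else n - 2 - i

lemma fA_lt (n : ℕ) (b : ℕ → Bool) {i : ℕ} (hn : 1 ≤ n) (hi : i < n) : fA n b i < n := by
  unfold fA; split <;> omega

/-- if `b i` is true then everything after `i` is smaller -/
lemma fA_desc_true (n : ℕ) (b : ℕ → Bool) (hb : ∀ k, n - 1 ≤ k → b k = true)
    {i j : ℕ} (hbi : b i = true) (hij : i < j) (hj : j < n) : fA n b j < fA n b i := by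
  have hp := pc_ge b hbi hij
  have h1 := pc_le b i
  have h2 := pc_le b j
  have hi1 : i < n - 1 := by
    by_contra h
    have h3 := hb j (by omega)
    have h4 := pc_ge b h3 (by omega : j < j + 1)
    omega
  unfold fA
  rw [hbi, if_pos rfl]
  by_cases hbj : b j = true
  · rw [if_pos hbj]; omega
  · rw [if_neg hbj]
    have : j < n - 1 := by
      by_contra h
      exact hbj (hb j (by omega))
    omega

lemma fA_ff (n : ℕ) (b : ℕ → Bool) (hb : ∀ k, n - 1 ≤ k → b k = true)
    {i j : ℕ} (hbi : b i = false) (hbj : b j = false) (hij : i < j) (hj : j < n) :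
    fA n b j < fA n b i := by
  have hj1 : j < n - 1 := by
    by_contra h
    rw [hb j (by omega)] at hbj
    simp at hbj
  unfold fA
  rw [hbi, hbj]
  simp only [Bool.false_eq_true, if_false]
  omega

lemma fA_ft_ne (n : ℕ) (b : ℕ → Bool) (hb : ∀ k, n - 1 ≤ k → b k = true)
    {i j : ℕ} (hbi : b i = false) (hbj : b j = true) (hij : i < j) (hj : j < n) :
    fA n b i ≠ fA n b j := by
  have hi1 : i < n - 1 := by
    by_contra h
    rw [hb i (by omega)] at hbi
    simp at hbi
  have h2 := pc_le b j
  unfold fA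
  rw [hbi, hbj, if_pos rfl]
  simp only [Bool.false_eq_true, if_false]
  intro h
  have hpj : pc b j = i + 1 := by omega
  have hc := pc_true b hpj
  rw [hbi] at hc
  simp at hc

lemma fA_ft_gt (n : ℕ) (b : ℕ → Bool) (hb : ∀ k, n - 1 ≤ k → b k = true)
    {i j : ℕ} (hbi : b i = false) (hbj : b j = true) (hij : i < j) (hj : j < n)
    (hlt : fA n b i < fA n b j) : pc b j ≤ i := by
  have hi1 : i < n - 1 := by
    by_contra h
    rw [hb i (by omega)] at hbi
    simp at hbi
  have h2 := pc_le b j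
  unfold fA at hlt
  rw [hbi, hbj, if_pos rfl] at hlt
  simp only [Bool.false_eq_true, if_false] at hlt
  omega

/-- there is a `true` after every position, with the same `pc` value -/
lemma exists_pc_true (n : ℕ) (b : ℕ → Bool) (hb : ∀ k, n - 1 ≤ k → b k = true) :
    ∀ d i, i < n → n - 1 - i ≤ d →
      ∃ j, i ≤ j ∧ j < n ∧ b j = true ∧ pc b j = pc b i := by
  intro d
  induction d with
  | zero =>
    intro i hi hd
    exact ⟨i, le_refl _, hi, hb i (by omega), rfl⟩
  | succ d ih =>
    intro i hi hd
    by_cases hbi : b i = true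
    · exact ⟨i, le_refl _, hi, hbi, rfl⟩
    · have hi1 : i < n - 1 := by
        by_contra h
        exact hbi (hb i (by omega))
      obtain ⟨j, hj1, hj2, hj3, hj4⟩ := ih (i+1) (by omega) (by omega)
      refine ⟨j, by omega, hj2, hj3, ?_⟩
      rw [hj4, pc_succ, if_neg hbi]


-- NEW PART
variable {n : ℕ}

/-- extension of `b : Fin (n-1) → Bool` to `ℕ` by `true` -/
def aext (n : ℕ) (b : Fin (n-1) → Bool) (k : ℕ) : Bool :=
  if h : k < n - 1 then b ⟨k, h⟩ else true

lemma aext_big (b : Fin (n-1) → Bool) : ∀ k, n - 1 ≤ k → aext n b k = true := by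
  intro k hk
  unfold aext
  rw [dif_neg (by omega)]

def SA (n : ℕ) : Set (Equiv.Perm (Fin n)) :=
  {α : Equiv.Perm (Fin n) |
        (¬ ∃ i j l : Fin n, i < j ∧ j < l ∧ α i < α j ∧ α j < α l) ∧
        (¬ ∃ i j l : Fin n, i < j ∧ j < l ∧ α i < α l ∧ α l < α j)}

/-- the combined avoidance condition -/
def CndA (α : Equiv.Perm (Fin n)) : Prop :=
  ∀ i j l : Fin n, i < j → j < l → ¬ (α i < α j ∧ α i < α l)

lemma mem_SA_iff_CndA (α : Equiv.Perm (Fin n)) : α ∈ SA n ↔ CndA α := by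
  constructor
  · intro hα i j l hij hjl ⟨h1, h2⟩
    have hne : α j ≠ α l := α.injective.ne (ne_of_lt hjl)
    rcases lt_or_gt_of_ne hne with h | h
    · exact hα.1 ⟨i, j, l, hij, hjl, h1, h⟩
    · exact hα.2 ⟨i, j, l, hij, hjl, h2, h⟩
  · intro hC
    constructor
    · rintro ⟨i, j, l, hij, hjl, h1, h2⟩
      exact hC i j l hij hjl ⟨h1, lt_trans h1 h2⟩
    · rintro ⟨i, j, l, hij, hjl, h1, h2⟩
      exact hC i j l hij hjl ⟨lt_trans h1 h2, h1⟩

noncomputable def GA (n : ℕ) (hn : 1 ≤ n) (b : Fin (n-1) → Bool) : Equiv.Perm (Fin n) :=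
  Equiv.ofBijective (fun i => (⟨fA n (aext n b) i, fA_lt n _ hn i.isLt⟩ : Fin n))
    (Finite.injective_iff_bijective.mp (by
      intro i j h
      simp only [Fin.mk.injEq] at h
      by_contra hne
      have hVne : (i : ℕ) ≠ (j : ℕ) := fun hv => hne (Fin.ext hv)
      have key : ∀ x y : Fin n, (x : ℕ) < (y : ℕ) →
          fA n (aext n b) x ≠ fA n (aext n b) y := by
        intro x y hxy
        rcases hbx : aext n b x with _ | _
        · rcases hby : aext n b y with _ | _
          · exact Nat.ne_of_lt' (fA_ff n _ (aext_big b) hbx hby hxy y.isLt)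
          · exact fA_ft_ne n _ (aext_big b) hbx hby hxy y.isLt
        · exact Nat.ne_of_lt' (fA_desc_true n _ (aext_big b) hbx hxy y.isLt)
      rcases lt_or_gt_of_ne hVne with hij | hij
      · exact key i j hij h
      · exact key j i hij h.symm))

lemma GA_apply (hn : 1 ≤ n) (b : Fin (n-1) → Bool) (i : Fin n) :
    (GA n hn b i : ℕ) = fA n (aext n b) i := rfl

lemma GA_cnd (hn : 1 ≤ n) (b : Fin (n-1) → Bool) : CndA (GA n hn b) := by
  intro i j l hij hjl ⟨h1, h2⟩
  rw [Fin.lt_def] at h1 h2 hij hjl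
  rw [GA_apply, GA_apply] at h1 h2
  rcases hbi : aext n b (i : ℕ) with _ | _
  · rcases hbj : aext n b (j : ℕ) with _ | _
    · exact absurd h1 (not_lt.mpr (le_of_lt (fA_ff n _ (aext_big b) hbi hbj hij j.isLt)))
    · rcases hbl : aext n b (l : ℕ) with _ | _
      · exact absurd h2 (not_lt.mpr (le_of_lt
          (fA_ff n _ (aext_big b) hbi hbl (lt_trans hij hjl) l.isLt)))
      · have hj := fA_ft_gt n _ (aext_big b) hbi hbj hij j.isLt h1
        have hl := fA_ft_gt n _ (aext_big b) hbi hbl (lt_trans hij hjl) l.isLt h2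
        have := pc_ge (aext n b) hbj hjl
        omega
  · exact absurd h1 (not_lt.mpr (le_of_lt (fA_desc_true n _ (aext_big b) hbi hij j.isLt)))

lemma GA_mem (hn : 1 ≤ n) (b : Fin (n-1) → Bool) : GA n hn b ∈ SA n :=
  (mem_SA_iff_CndA _).mpr (GA_cnd hn b)

/-- `Dcl` is readable from `b` -/
lemma GA_dcl (hn : 1 ≤ n) (b : Fin (n-1) → Bool) (i : Fin n) (hi : (i : ℕ) < n - 1) :
    Dcl (GA n hn b) i ↔ aext n b (i : ℕ) = true := by
  constructor
  · intro hD
    by_contra hbi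
    rw [Bool.not_eq_true] at hbi
    obtain ⟨j, hj1, hj2, hj3, hj4⟩ :=
      exists_pc_true n (aext n b) (aext_big b) (n - 1 - (i : ℕ)) (i : ℕ) i.isLt (le_refl _)
    have hij : (i : ℕ) < j := by
      rcases Nat.lt_or_ge (i : ℕ) j with h | h
      · exact h
      · obtain rfl : j = (i : ℕ) := by omega
        rw [hj3] at hbi; simp at hbi
    have hgt : fA n (aext n b) (i : ℕ) < fA n (aext n b) j := by
      have h1 := pc_le (aext n b) (i : ℕ)
      unfold fA
      rw [hbi, hj3, if_pos rfl, hj4]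
      simp only [Bool.false_eq_true, if_false]
      omega
    have hlt := hD ⟨j, hj2⟩ (by rw [Fin.lt_def]; exact hij)
    rw [Fin.lt_def] at hlt
    rw [GA_apply, GA_apply] at hlt
    simp only [Fin.val_mk] at hlt
    omega
  · intro hbi
    intro m hm
    rw [Fin.lt_def] at hm ⊢
    rw [GA_apply, GA_apply]
    exact fA_desc_true n _ (aext_big b) hbi hm m.isLt

lemma GA_inj (hn : 1 ≤ n) : Function.Injective (GA n hn) := by
  intro b1 b2 h
  funext k
  have hk : (k : ℕ) < n - 1 := k.isLt
  have hkn : (k : ℕ) < n := by omega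
  have key : ∀ b : Fin (n-1) → Bool,
      b k = decide (Dcl (GA n hn b) ⟨(k : ℕ), hkn⟩) := by
    intro b
    have hval : aext n b (k : ℕ) = b k := by
      unfold aext; rw [dif_pos hk]
    have := GA_dcl hn b ⟨(k : ℕ), hkn⟩ (by simpa using hk)
    simp only [Fin.val_mk] at this
    rcases hb : b k with _ | _
    · symm; rw [decide_eq_false_iff_not]
      intro hD
      rw [this.mp hD, hb] at hval
      simp at hval
    · symm; rw [decide_eq_true_eq]
      rw [hb] at hval
      exact this.mpr hval
  rw [key b1, key b2, h]


-- NEW PART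
variable {n : ℕ}

/-- a non-dominant entry has value `n - 2 - i` -/
lemma CndA_val_notDcl {α : Equiv.Perm (Fin n)} (hC : CndA α) {i : Fin n}
    (hD : ¬ Dcl α i) : (α i : ℕ) = n - 2 - (i : ℕ) := by
  -- a later bigger element
  obtain ⟨m, hm, hm'⟩ : ∃ m, i < m ∧ α i < α m := by
    unfold Dcl at hD
    push_neg at hD
    obtain ⟨m, hm, hm'⟩ := hD
    exact ⟨m, hm, lt_of_le_of_ne hm' (fun h => (ne_of_lt hm) (α.injective h))⟩
  have hE1 : (Finset.univ.filter fun k : Fin n => k < i ∧ α k < α i).card = 0 := by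
    rw [Finset.card_eq_zero]
    ext k
    simp only [Finset.mem_filter, Finset.mem_univ, true_and, Finset.notMem_empty,
      iff_false, not_and]
    intro hk hlt
    exact hC k i m hk hm ⟨hlt, lt_trans hlt hm'⟩
  -- exactly one later bigger element
  have hG : (Finset.univ.filter fun k : Fin n => i < k ∧ α i < α k) = {m} := by
    rw [Finset.eq_singleton_iff_unique_mem]
    refine ⟨by simp [hm, hm'], ?_⟩
    intro x hx
    simp only [Finset.mem_filter, Finset.mem_univ, true_and] at hx
    by_contra hne
    rcases lt_or_gt_of_ne hne with h | h
    · exact hC i x m hx.1 h ⟨hx.2, hm'⟩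
    · exact hC i m x hm h ⟨hm', hx.2⟩
  have hE2 : (Finset.univ.filter fun k : Fin n => i < k ∧ α k < α i).card
      = n - 1 - (i : ℕ) - 1 := by
    have hsub : (Finset.univ.filter fun k : Fin n => i < k ∧ α k < α i)
        = (Finset.univ.filter fun k : Fin n => i < k) \ {m} := by
      rw [← hG]
      ext k
      simp only [Finset.mem_sdiff, Finset.mem_filter, Finset.mem_univ, true_and, not_and]
      constructor
      · intro ⟨h1, h2⟩
        exact ⟨h1, fun _ => not_lt.mpr (le_of_lt h2)⟩
      · intro ⟨h1, h2⟩
        refine ⟨h1, ?_⟩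
        have := h2 h1
        rcases lt_or_gt_of_ne (α.injective.ne (ne_of_gt h1)) with h | h
        · exact h
        · exact absurd h this
    rw [hsub, Finset.card_sdiff_of_subset (by simp [hG.symm.le]; rw [← hG] at *; simp [hm, hm'])]
    rw [card_gt_val, Finset.card_singleton]
  have hval := card_val_lt_split n α i
  rw [hE1, hE2] at hval
  have him : (m : ℕ) < n := m.isLt
  have hin : (i : ℕ) < (m : ℕ) := hm
  omega

/-- the main value formula for permutations satisfying `CndA` -/
lemma CndA_val {α : Equiv.Perm (Fin n)} (hC : CndA α) (i : Fin n)
    (b : Fin (n-1) → Bool)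
    (hb : ∀ k : Fin (n-1), b k = decide (Dcl α (Fin.castLE (by omega) k))) :
    (α i : ℕ) = fA n (aext n b) (i : ℕ) := by
  have hiN : (i : ℕ) ≤ n - 1 := by have := i.isLt; omega
  have haext : ∀ k : Fin n, (k : ℕ) < n - 1 → (aext n b (k : ℕ) = true ↔ Dcl α k) := by
    intro k hk
    unfold aext
    rw [dif_pos hk, hb ⟨(k : ℕ), hk⟩]
    have : Fin.castLE (by omega : n - 1 ≤ n) (⟨(k : ℕ), hk⟩ : Fin (n-1)) = k :=
      Fin.ext rfl
    rw [this, decide_eq_true_eq]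
  by_cases hD : Dcl α i
  · -- dominant case
    set e := (Finset.univ.filter fun k : Fin n => k < i ∧ α k < α i).card with he
    have hE2 : (Finset.univ.filter fun k : Fin n => i < k ∧ α k < α i).card
        = n - 1 - (i : ℕ) := by
      rw [← card_gt_val n i]
      congr 1
      ext k
      simp only [Finset.mem_filter, Finset.mem_univ, true_and, and_iff_left_iff_imp]
      exact fun hk => hD k hk
    have hval := card_val_lt_split n α i
    rw [← he, hE2] at hval
    have he_le : e ≤ (i : ℕ) := by
      rw [he, ← card_lt_val n i]
      apply Finset.card_le_card
      intro k hk
      simp only [Finset.mem_filter, Finset.mem_univ, true_and] at hk ⊢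
      exact hk.1
    -- the positions contributing to e form the interval [i-e, i)
    have hScard : (Finset.univ.filter
        fun k : Fin n => k < i ∧ (i : ℕ) - e ≤ (k : ℕ)).card = e := by
      rw [card_fin_lt n i (fun m => (i : ℕ) - e ≤ m)]
      have : (Finset.range (i : ℕ)).filter (fun m => (i : ℕ) - e ≤ m)
          = Finset.Ico ((i : ℕ) - e) (i : ℕ) := by
        ext m
        simp only [Finset.mem_filter, Finset.mem_range, Finset.mem_Ico]
        omega
      rw [this, Nat.card_Ico]
      omega
    have hsub : (Finset.univ.filter fun k : Fin n => k < i ∧ α k < α i)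
        ⊆ (Finset.univ.filter fun k : Fin n => k < i ∧ (i : ℕ) - e ≤ (k : ℕ)) := by
      intro k hk
      simp only [Finset.mem_filter, Finset.mem_univ, true_and] at hk ⊢
      refine ⟨hk.1, ?_⟩
      have hDk : ¬ Dcl α k := by
        intro hDk
        exact absurd (hDk i hk.1) (asymm hk.2)
      have hkv := CndA_val_notDcl hC hDk
      have hlt : (α k : ℕ) < (α i : ℕ) := hk.2
      rw [hkv] at hlt
      have hki : (k : ℕ) < (i : ℕ) := hk.1
      omega
    have hEq : (Finset.univ.filter fun k : Fin n => k < i ∧ α k < α i)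
        = (Finset.univ.filter fun k : Fin n => k < i ∧ (i : ℕ) - e ≤ (k : ℕ)) :=
      Finset.eq_of_subset_of_card_le hsub (by rw [hScard, ← he])
    -- all of [i-e, i) is non-dominant
    have hrun : ∀ k, (i : ℕ) - e ≤ k → k < (i : ℕ) → aext n b k = false := by
      intro k hk1 hk2
      have hkn : k < n := by omega
      have hmem : (⟨k, hkn⟩ : Fin n) ∈
          (Finset.univ.filter fun x : Fin n => x < i ∧ (i : ℕ) - e ≤ (x : ℕ)) := by
        simp only [Finset.mem_filter, Finset.mem_univ, true_and]
        exact ⟨by rw [Fin.lt_def]; exact hk2, hk1⟩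
      rw [← hEq] at hmem
      simp only [Finset.mem_filter, Finset.mem_univ, true_and] at hmem
      have hDk : ¬ Dcl α ⟨k, hkn⟩ := by
        intro hDk
        exact absurd (hDk i hmem.1) (asymm hmem.2)
      have hiff := haext ⟨k, hkn⟩ (by show k < n - 1; omega)
      rw [← Bool.not_eq_true]
      intro hT
      exact hDk (hiff.mp hT)
    -- the position before the run is dominant
    have hstart : (i : ℕ) - e = 0 ∨ aext n b ((i : ℕ) - e - 1) = true := by
      rcases Nat.eq_zero_or_pos ((i : ℕ) - e) with h0 | hpos
      · exact Or.inl h0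
      · right
        set k0 := (i : ℕ) - e - 1 with hk0
        have hk0i : k0 < (i : ℕ) := by omega
        have hk0n : k0 < n := by omega
        have hnotmem : (⟨k0, hk0n⟩ : Fin n) ∉
            (Finset.univ.filter fun k : Fin n => k < i ∧ α k < α i) := by
          rw [hEq]
          simp only [Finset.mem_filter, Finset.mem_univ, true_and, not_and]
          intro _
          omega
        simp only [Finset.mem_filter, Finset.mem_univ, true_and, not_and] at hnotmem
        have hk0lt : (⟨k0, hk0n⟩ : Fin n) < i := by rw [Fin.lt_def]; exact hk0i
        have hge : ¬ (α ⟨k0, hk0n⟩ < α i) := hnotmem hk0lt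
        have hDk0 : Dcl α ⟨k0, hk0n⟩ := by
          by_contra hDk0
          have := CndA_val_notDcl hC hDk0
          simp only [Fin.val_mk] at this
          have hne : α ⟨k0, hk0n⟩ ≠ α i := α.injective.ne (by
            intro h
            rw [h] at hk0lt
            exact absurd hk0lt (lt_irrefl _))
          have hvne : (α ⟨k0, hk0n⟩ : ℕ) ≠ (α i : ℕ) := fun h => hne (Fin.ext h)
          rw [not_lt, Fin.le_def] at hge
          rw [this] at hvne hge
          omega
        have := haext ⟨k0, hk0n⟩ (by simp only [Fin.val_mk]; omega)
        simp only [Fin.val_mk] at this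
        exact this.mpr hDk0
    have hpc : pc (aext n b) (i : ℕ) = (i : ℕ) - e :=
      pc_run (aext n b) (by omega) hrun hstart
    have hbi : aext n b (i : ℕ) = true := by
      rcases Nat.lt_or_ge (i : ℕ) (n - 1) with hi | hi
      · exact (haext i hi).mpr hD
      · unfold aext; rw [dif_neg (by omega)]
    unfold fA
    rw [hbi, if_pos rfl, hpc]
    omega
  · -- non-dominant case
    have hval := CndA_val_notDcl hC hD
    have hi1 : (i : ℕ) < n - 1 := by
      rcases Nat.lt_or_ge (i : ℕ) (n - 1) with h | h
      · exact h
      · exfalso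
        apply hD
        intro m hm
        rw [Fin.lt_def] at hm
        have := m.isLt
        omega
    have hbi : aext n b (i : ℕ) = false := by
      rw [← Bool.not_eq_true]
      intro hT
      exact hD ((haext i hi1).mp hT)
    unfold fA
    rw [hbi]
    simp only [Bool.false_eq_true, if_false]
    exact hval



lemma SA_eq (hn : 1 ≤ n) : SA n = Set.range (GA n hn) := by
  ext α
  constructor
  · intro hα
    refine ⟨fun k => decide (Dcl α (Fin.castLE (by omega) k)), ?_⟩
    apply Equiv.ext
    intro i
    apply Fin.ext
    rw [GA_apply]
    exact (CndA_val ((mem_SA_iff_CndA α).mp hα) i _ (fun k => rfl)).symm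
  · rintro ⟨b, rfl⟩
    exact GA_mem hn b

lemma SA_card (hn : 1 ≤ n) : (SA n).ncard = 2 ^ (n - 1) := by
  rw [SA_eq hn, ← Set.image_univ, Set.ncard_image_of_injective _ (GA_inj hn),
    Set.ncard_univ]
  simp [Nat.card_eq_fintype_card]

end S18

theorem stmt18 (n : ℕ) (hn : 3 ≤ n) :
    Set.ncard {α : Equiv.Perm (Fin n) |
        (¬ ∃ i j l : Fin n, i < j ∧ j < l ∧ α i < α j ∧ α j < α l) ∧
        (¬ ∃ i j l : Fin n, i < j ∧ j < l ∧ α i < α l ∧ α l < α j)}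
      = 2 ^ (n - 1)
    ∧ Set.ncard {α : Equiv.Perm (Fin n) |
        (¬ ∃ i j l : Fin n, i < j ∧ j < l ∧ α j < α i ∧ α i < α l) ∧
        (¬ ∃ i j l : Fin n, i < j ∧ j < l ∧ α l < α i ∧ α i < α j)}
      = 2 ^ (n - 1) := by
  constructor
  · exact S18.SA_card (by omega)
  · exact S18.SB_card
end

section
/- For n ≥ 4, the number of permutations of {1,…,n} avoiding all six patterns in T_4^2 = {2134, 2143, 2314, 2341, 2413, 2431} equals 2·3^(n-2). -/
open Finset in
/-- standardization: rank function -/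
noncomputable def stdz {k n : ℕ} [NeZero k] (v : Fin k → Fin n) : Fin k → Fin k :=
  fun j => ⟨#(univ.filter (fun j' => v j' < v j)), by
    have : (univ.filter (fun j' => v j' < v j)) ⊆ univ.erase j := by
      intro x hx
      simp only [mem_filter] at hx
      exact mem_erase.2 ⟨fun h => by subst h; exact lt_irrefl _ hx.2, mem_univ _⟩
    calc #(univ.filter (fun j' => v j' < v j)) ≤ #(univ.erase j) := card_le_card this
      _ < #(univ : Finset (Fin k)) := card_erase_lt_of_mem (mem_univ _)
      _ = k := by simp⟩

open Finset in
lemma stdz_lt_iff {k n : ℕ} [NeZero k] {v : Fin k → Fin n} (hv : Function.Injective v)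
    (i j : Fin k) : stdz v i < stdz v j ↔ v i < v j := by
  have mono : ∀ a b : Fin k, v a < v b → stdz v a < stdz v b := by
    intro a b hab
    have hsub : (univ.filter (fun j' => v j' < v a)) ⊂ (univ.filter (fun j' => v j' < v b)) := by
      refine Finset.ssubset_iff_of_subset ?_ |>.2 ⟨a, ?_, ?_⟩
      · intro x hx; simp only [mem_filter] at hx ⊢; exact ⟨mem_univ _, hx.2.trans hab⟩
      · simp [hab]
      · simp
    exact Fin.mk_lt_mk.2 (card_lt_card hsub)
  constructor
  · intro h
    rcases lt_trichotomy (v i) (v j) with h' | h' | h'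
    · exact h'
    · exact absurd (hv h') (by rintro rfl; exact lt_irrefl _ h)
    · exact absurd h (not_lt.2 (mono _ _ h').le)
  · exact mono i j

open Finset in
lemma stdz_injective {k n : ℕ} [NeZero k] {v : Fin k → Fin n} (hv : Function.Injective v) :
    Function.Injective (stdz v) := by
  intro a b hab
  by_contra hne
  rcases lt_or_gt_of_ne (fun h : v a = v b => hne (hv h)) with h | h
  · exact absurd hab (ne_of_lt ((stdz_lt_iff hv a b).2 h))
  · exact absurd hab.symm (ne_of_lt ((stdz_lt_iff hv b a).2 h))

noncomputable def stdzPerm {k n : ℕ} [NeZero k] (v : Fin k → Fin n)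
    (hv : Function.Injective v) : Equiv.Perm (Fin k) :=
  Equiv.ofBijective (stdz v) ((Finite.injective_iff_bijective).1 (stdz_injective hv))

lemma stdzPerm_apply {k n : ℕ} [NeZero k] (v : Fin k → Fin n) (hv : Function.Injective v)
    (j : Fin k) : stdzPerm v hv j = stdz v j := rfl

/-- the combinatorial condition equivalent to avoiding all of T_4^2 -/
def Cond {n : ℕ} (α : Equiv.Perm (Fin n)) : Prop :=
  ∀ i a b c : Fin n, i < a → i < b → i < c → b ≠ c →
    α a < α i → α i < α b → α i < α c → False

open Finset in
lemma key_contains {n : ℕ} (α : Equiv.Perm (Fin n)) (i x y z : Fin n)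
    (hix : i < x) (hxy : x < y) (hyz : y < z)
    (hshape : (α x < α i ∧ α i < α y ∧ α i < α z) ∨
              (α i < α x ∧ α y < α i ∧ α i < α z) ∨
              (α i < α x ∧ α i < α y ∧ α z < α i)) :
    ∃ τ ∈ Tkm 4 2, Contains τ α := by
  set f : Fin 4 → Fin n := ![i, x, y, z] with hf
  have hfm : StrictMono f := by
    rw [Fin.strictMono_iff_lt_succ]
    intro p
    fin_cases p <;> simpa [hf] using by first | exact hix | exact hxy | exact hyz
  set v : Fin 4 → Fin n := fun j => α (f j) with hv
  have hvi : Function.Injective v := fun a b h => hfm.injective (α.injective h)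
  refine ⟨stdzPerm v hvi, ?_, f, hfm, fun p q => (stdz_lt_iff hvi p q).trans Iff.rfl⟩
  intro j hj
  have hj0 : j = 0 := Fin.ext hj
  subst hj0
  have h0 : v 0 = α i := by simp [hv, hf]
  have h1 : v 1 = α x := by simp [hv, hf]
  have h2 : v 2 = α y := by simp [hv, hf]
  have h3 : v 3 = α z := by simp [hv, hf]
  have hcard : #(univ.filter (fun j' => v j' < v 0)) = 1 := by
    rcases hshape with ⟨ha, hb, hc⟩ | ⟨ha, hb, hc⟩ | ⟨ha, hb, hc⟩
    · rw [show (univ.filter (fun j' => v j' < v 0)) = {1} from ?_, card_singleton]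
      ext j; fin_cases j <;>
        simp [h0, h1, h2, h3, ha, not_lt.2 hb.le, not_lt.2 hc.le]
    · rw [show (univ.filter (fun j' => v j' < v 0)) = {2} from ?_, card_singleton]
      ext j; fin_cases j <;>
        simp [h0, h1, h2, h3, hb, not_lt.2 ha.le, not_lt.2 hc.le]
    · rw [show (univ.filter (fun j' => v j' < v 0)) = {3} from ?_, card_singleton]
      ext j; fin_cases j <;>
        simp [h0, h1, h2, h3, hc, not_lt.2 ha.le, not_lt.2 hb.le]
  show (stdz v 0 : ℕ) + 1 = 2
  simp only [stdz, hcard]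

lemma not_cond_contains {n : ℕ} (α : Equiv.Perm (Fin n)) (h : ¬ Cond α) :
    ∃ τ ∈ Tkm 4 2, Contains τ α := by
  simp only [Cond, not_forall] at h
  obtain ⟨i, a, b, c, hia, hib, hic, hbc, ha, hb, hc, -⟩ := h
  have hab : a ≠ b := fun h => absurd (h ▸ ha) (not_lt.2 hb.le)
  have hac : a ≠ c := fun h => absurd (h ▸ ha) (not_lt.2 hc.le)
  rcases lt_or_gt_of_ne hab with h1 | h1 <;> rcases lt_or_gt_of_ne hac with h2 | h2 <;>
    rcases lt_or_gt_of_ne hbc with h3 | h3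
  · exact key_contains α i a b c hia h1 h3 (Or.inl ⟨ha, hb, hc⟩)
  · exact key_contains α i a c b hia h2 h3 (Or.inl ⟨ha, hc, hb⟩)
  · exact absurd ((h2.trans h1).trans h3) (lt_irrefl _)
  · exact key_contains α i c a b hic h2 h1 (Or.inr (Or.inl ⟨hc, ha, hb⟩))
  · exact key_contains α i b a c hib h1 h2 (Or.inr (Or.inl ⟨hb, ha, hc⟩))
  · exact absurd ((h2.trans h3).trans h1) (lt_irrefl _)
  · exact key_contains α i b c a hib h3 h2 (Or.inr (Or.inr ⟨hb, hc, ha⟩))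
  · exact key_contains α i c b a hic h3 h1 (Or.inr (Or.inr ⟨hc, hb, ha⟩))

lemma cond_avoids {n : ℕ} (α : Equiv.Perm (Fin n)) (hC : Cond α) :
    ∀ τ ∈ Tkm 4 2, Avoids τ α := by
  intro τ hτ ⟨f, hfm, hiff⟩
  have hτ0 : τ 0 = 1 := by
    have := hτ 0 rfl
    exact Fin.ext (by omega)
  set a : Fin 4 := τ.symm 0 with ha
  set b : Fin 4 := τ.symm 2 with hb
  set c : Fin 4 := τ.symm 3 with hc
  have hta : τ a = 0 := τ.apply_symm_apply 0
  have htb : τ b = 2 := τ.apply_symm_apply 2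
  have htc : τ c = 3 := τ.apply_symm_apply 3
  have ha0 : 0 < a := Fin.pos_of_ne_zero (fun h => by rw [h, hτ0] at hta; exact absurd hta (by decide))
  have hb0 : 0 < b := Fin.pos_of_ne_zero (fun h => by rw [h, hτ0] at htb; exact absurd htb (by decide))
  have hc0 : 0 < c := Fin.pos_of_ne_zero (fun h => by rw [h, hτ0] at htc; exact absurd htc (by decide))
  have hbc : b ≠ c := fun h => by rw [h, htc] at htb; exact absurd htb (by decide)
  refine hC (f 0) (f a) (f b) (f c) (hfm ha0) (hfm hb0) (hfm hc0)
    (fun h => hbc (hfm.injective h)) ?_ ?_ ?_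
  · exact (hiff a 0).1 (by rw [hta, hτ0]; decide)
  · exact (hiff 0 b).1 (by rw [htb, hτ0]; decide)
  · exact (hiff 0 c).1 (by rw [htc, hτ0]; decide)

lemma avoid_set_eq {n : ℕ} :
    {α : Equiv.Perm (Fin n) | ∀ τ ∈ Tkm 4 2, Avoids τ α} = {α | Cond α} := by
  ext α
  constructor
  · intro h
    by_contra hC
    obtain ⟨τ, hτ, hcon⟩ := not_cond_contains α hC
    exact h τ hτ hcon
  · exact fun h => cond_avoids α h

noncomputable def theta {n : ℕ} (p : Fin (n + 1)) (β : Equiv.Perm (Fin n)) : Equiv.Perm (Fin (n + 1)) :=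
  Equiv.ofBijective (fun x => Fin.cases p (fun i => p.succAbove (β i)) x)
    (Finite.injective_iff_bijective.1 (by
      intro x y hxy
      induction x using Fin.cases with
      | zero =>
        induction y using Fin.cases with
        | zero => rfl
        | succ j => exact absurd hxy.symm (Fin.succAbove_ne p (β j))
      | succ i =>
        induction y using Fin.cases with
        | zero => exact absurd hxy (Fin.succAbove_ne p (β i))
        | succ j =>
          simp only [Fin.cases_succ] at hxy
          exact congrArg Fin.succ (β.injective (Fin.succAbove_right_injective hxy))))

@[simp] lemma theta_zero {n : ℕ} (p : Fin (n + 1)) (β : Equiv.Perm (Fin n)) :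
    theta p β 0 = p := rfl

@[simp] lemma theta_succ {n : ℕ} (p : Fin (n + 1)) (β : Equiv.Perm (Fin n)) (i : Fin n) :
    theta p β i.succ = p.succAbove (β i) := rfl

set_option maxHeartbeats 1000000 in
lemma cond_theta_iff {n : ℕ} (p : Fin (n + 1)) (β : Equiv.Perm (Fin n)) :
    Cond (theta p β) ↔ ((p : ℕ) = 0 ∨ n ≤ (p : ℕ) + 1) ∧ Cond β := by
  constructor
  · intro hC
    constructor
    · by_contra hp
      push_neg at hp
      obtain ⟨hp0, hpn⟩ := hp
      have hp0' : 0 < (p : ℕ) := Nat.pos_of_ne_zero hp0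
      set α := theta p β with hα
      have hn : (p : ℕ) + 1 < n := hpn
      set a := α.symm 0 with ha
      set b := α.symm (Fin.last n) with hb
      set c := α.symm ⟨n - 1, by omega⟩ with hc
      have hva : α a = 0 := α.apply_symm_apply _
      have hvb : α b = Fin.last n := α.apply_symm_apply _
      have hvc : α c = ⟨n - 1, by omega⟩ := α.apply_symm_apply _
      have hα0 : α 0 = p := rfl
      have haa : 0 < a := Fin.pos_of_ne_zero (by
        intro h; rw [h, hα0] at hva; exact hp0 (congrArg Fin.val hva))
      have hab : 0 < b := Fin.pos_of_ne_zero (by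
        intro h; rw [h, hα0] at hvb
        have := congrArg Fin.val hvb; simp [Fin.last] at this; omega)
      have hac : 0 < c := Fin.pos_of_ne_zero (by
        intro h; rw [h, hα0] at hvc
        have := congrArg Fin.val hvc; simp at this; omega)
      have hbc : b ≠ c := by
        intro h
        rw [h, hvc] at hvb
        have := congrArg Fin.val hvb; simp [Fin.last] at this; omega
      refine hC 0 a b c haa hab hac hbc ?_ ?_ ?_
      · rw [hva, hα0]; exact Fin.lt_def.2 (by simpa using hp0')
      · rw [hvb, hα0]; exact Fin.lt_def.2 (by simp [Fin.last]; omega)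
      · rw [hvc, hα0]; exact Fin.lt_def.2 (by simp; omega)
    · intro i a b c hia hib hic hbc hva hvb hvc
      refine hC i.succ a.succ b.succ c.succ (Fin.succ_lt_succ_iff.2 hia)
        (Fin.succ_lt_succ_iff.2 hib) (Fin.succ_lt_succ_iff.2 hic)
        (fun h => hbc (Fin.succ_injective _ h)) ?_ ?_ ?_ <;>
        simpa [Fin.succAbove_lt_succAbove_iff] using by assumption
  · rintro ⟨hgood, hCβ⟩ i a b c hia hib hic hbc hva hvb hvc
    induction i using Fin.cases with
    | zero =>
      rw [theta_zero] at hva hvb hvc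
      rcases hgood with h0 | hn
      · have : (theta p β a : ℕ) < (p : ℕ) := hva
        omega
      · have h1 : (p : ℕ) < (theta p β b : ℕ) := hvb
        have h2 : (p : ℕ) < (theta p β c : ℕ) := hvc
        have h3 : (theta p β b : ℕ) ≤ n := Nat.lt_succ_iff.1 (theta p β b).isLt
        have h4 : (theta p β c : ℕ) ≤ n := Nat.lt_succ_iff.1 (theta p β c).isLt
        have : theta p β b = theta p β c := Fin.ext (by omega)
        exact hbc ((theta p β).injective this)
    | succ i' =>
      obtain ⟨a', rfl⟩ := Fin.eq_succ_of_ne_zero (Fin.pos_iff_ne_zero.1 ((Fin.succ_pos i').trans hia))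
      obtain ⟨b', rfl⟩ := Fin.eq_succ_of_ne_zero (Fin.pos_iff_ne_zero.1 ((Fin.succ_pos i').trans hib))
      obtain ⟨c', rfl⟩ := Fin.eq_succ_of_ne_zero (Fin.pos_iff_ne_zero.1 ((Fin.succ_pos i').trans hic))
      simp only [theta_succ, Fin.succAbove_lt_succAbove_iff] at hva hvb hvc
      exact hCβ i' a' b' c' (Fin.succ_lt_succ_iff.1 hia) (Fin.succ_lt_succ_iff.1 hib)
        (Fin.succ_lt_succ_iff.1 hic) (fun h => hbc (congrArg Fin.succ h)) hva hvb hvc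

lemma theta_pair_injective {n : ℕ} :
    Function.Injective (fun q : Fin (n + 1) × Equiv.Perm (Fin n) => theta q.1 q.2) := by
  rintro ⟨p, β⟩ ⟨p', β'⟩ h
  simp only at h
  have hp : p = p' := by
    have := congrArg (fun e : Equiv.Perm (Fin (n + 1)) => e 0) h
    simpa using this
  subst hp
  have hβ : β = β' := by
    ext i
    have := congrArg (fun e : Equiv.Perm (Fin (n + 1)) => e i.succ) h
    simp only [theta_succ] at this
    exact congrArg Fin.val (Fin.succAbove_right_injective this)
  rw [hβ]

lemma theta_pair_surjective {n : ℕ} :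
    Function.Surjective (fun q : Fin (n + 1) × Equiv.Perm (Fin n) => theta q.1 q.2) := by
  have hcard : Fintype.card (Fin (n + 1) × Equiv.Perm (Fin n))
      = Fintype.card (Equiv.Perm (Fin (n + 1))) := by
    simp [Fintype.card_perm, Nat.factorial_succ]
  exact ((Fintype.bijective_iff_injective_and_card _).2 ⟨theta_pair_injective, hcard⟩).2

lemma ncard_prod_set {A B : Type*} (s : Set A) (t : Set B) :
    (s ×ˢ t).ncard = s.ncard * t.ncard := by
  rw [← Nat.card_coe_set_eq, ← Nat.card_coe_set_eq, ← Nat.card_coe_set_eq,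
    Nat.card_congr (Equiv.Set.prod s t), Nat.card_prod]

lemma card_step (n : ℕ) :
    Set.ncard {α : Equiv.Perm (Fin (n + 1)) | Cond α}
      = Set.ncard {p : Fin (n + 1) | (p : ℕ) = 0 ∨ n ≤ (p : ℕ) + 1}
        * Set.ncard {β : Equiv.Perm (Fin n) | Cond β} := by
  have himg : {α : Equiv.Perm (Fin (n + 1)) | Cond α}
      = (fun q : Fin (n + 1) × Equiv.Perm (Fin n) => theta q.1 q.2) ''
        ({p : Fin (n + 1) | (p : ℕ) = 0 ∨ n ≤ (p : ℕ) + 1} ×ˢ {β | Cond β}) := by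
    ext α
    constructor
    · intro hα
      obtain ⟨⟨p, β⟩, rfl⟩ := theta_pair_surjective α
      have := (cond_theta_iff p β).1 hα
      exact ⟨⟨p, β⟩, ⟨this.1, this.2⟩, rfl⟩
    · rintro ⟨⟨p, β⟩, ⟨hp, hβ⟩, rfl⟩
      exact (cond_theta_iff p β).2 ⟨hp, hβ⟩
  rw [himg, Set.ncard_image_of_injective _ theta_pair_injective, ncard_prod_set]

lemma card_pset (n : ℕ) :
    Set.ncard {p : Fin (n + 3) | (p : ℕ) = 0 ∨ n + 2 ≤ (p : ℕ) + 1} = 3 := by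
  have hset : {p : Fin (n + 3) | (p : ℕ) = 0 ∨ n + 2 ≤ (p : ℕ) + 1}
      = {(0 : Fin (n + 3)), ⟨n + 1, by omega⟩, ⟨n + 2, by omega⟩} := by
    ext p
    simp only [Set.mem_setOf_eq, Set.mem_insert_iff, Set.mem_singleton_iff]
    constructor
    · intro h
      have hlt := p.isLt
      rcases h with h | h
      · exact Or.inl (Fin.ext h)
      · rcases Nat.lt_or_ge (p : ℕ) (n + 2) with h2 | h2
        · exact Or.inr (Or.inl (Fin.ext (show (p : ℕ) = n + 1 by omega)))
        · exact Or.inr (Or.inr (Fin.ext (show (p : ℕ) = n + 2 by omega)))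
    · rintro (rfl | rfl | rfl)
      · exact Or.inl rfl
      · exact Or.inr (Nat.le_refl _)
      · exact Or.inr (Nat.le_succ _)
  rw [hset]
  rw [Set.ncard_insert_of_notMem (by
    simp only [Set.mem_insert_iff, Set.mem_singleton_iff]
    rintro (h | h) <;> exact absurd (congrArg Fin.val h) (by simp)),
    Set.ncard_pair (by intro h; exact absurd (congrArg Fin.val h) (by simp))]

lemma card_base : Set.ncard {β : Equiv.Perm (Fin 2) | Cond β} = 2 := by
  have : {β : Equiv.Perm (Fin 2) | Cond β} = Set.univ := by
    ext β
    simp only [Set.mem_setOf_eq, Set.mem_univ, iff_true]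
    intro i a b c hia hib hic hbc _ _ _
    apply hbc
    have h1 := hib
    have h2 := hic
    have := b.isLt; have := c.isLt; have := i.isLt
    exact Fin.ext (by omega)
  rw [this, Set.ncard_univ, Nat.card_eq_fintype_card, Fintype.card_perm]
  rfl

lemma card_main (m : ℕ) :
    Set.ncard {α : Equiv.Perm (Fin (m + 2)) | Cond α} = 2 * 3 ^ m := by
  induction m with
  | zero => simpa using card_base
  | succ k ih =>
    have := card_step (k + 2)
    rw [show k + 2 + 1 = k + 3 from rfl] at this
    rw [this, card_pset, ih]
    ring

theorem stmt19 (n : ℕ) (hn : 4 ≤ n) :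
    Set.ncard {α : Equiv.Perm (Fin n) | ∀ τ ∈ Tkm 4 2, Avoids τ α}
      = 2 * 3 ^ (n - 2) := by
  obtain ⟨m, rfl⟩ : ∃ m, n = m + 2 := ⟨n - 2, by omega⟩
  rw [avoid_set_eq, card_main]
  congr 1
end
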